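/- Let (g,J) and (g',J') be 8-dimensional nilpotent Lie algebras with weakly non-nilpotent complex structures given by the equations (★) with admissible parameters (ε,δ,ν,a,B) and (ε',δ',ν',a',B'). Then J and J' are equivalent if and only if there is a ℂ-linear isomorphism F : g'^{1,0} → g^{1,0}, F(ω'^i) = Σ_j λ^i_j ω^j, with d ∘ F = F ∘ d, triangular as in the previous lemma, satisfying λ¹₁ = e^{iθ}, λ²₂ = λ e^{iθ}, λ³₃ = λ for some θ ∈ [0,2π) and λ ∈ ℝ∖{0}, together with ε(1−λ) = 0, Im(e^{iθ} · conj(λ²₁)) = 0 and λ e^{iθ} λ⁴₂ − ν λ²₁ λ⁴₄ = 0. Moreover, in that case the parameters are related by ε' = ε, δ' = δ, a' = a λ⁴₄ / ((λ¹₁)² λ³₃), B' = B λ⁴₄, and ν' = ν λ⁴₄ / (λ¹₁ (λ³₃)²). -/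

import Mathlib

noncomputable section

open Complex Module
open scoped TensorProduct

namespace Paper

/-- The ascending central series of a real Lie algebra. -/
def ascSeries (g : Type*) [LieRing g] [LieAlgebra ℝ g] : ℕ → Submodule ℝ g
  | 0 => ⊥
  | k + 1 =>
    { carrier := {X : g | ∀ Y : g, ⁅X, Y⁆ ∈ ascSeries g k}
      add_mem' := fun ha hb Y => by
        rw [add_lie]; exact Submodule.add_mem _ (ha Y) (hb Y)
      zero_mem' := fun Y => by rw [zero_lie]; exact Submodule.zero_mem _
      smul_mem' := fun c x hx Y => by rw [smul_lie]; exact Submodule.smul_mem _ c (hx Y) }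

/-- A Lie algebra is nilpotent when its ascending central series reaches the whole algebra. -/
def IsNilpotentLie (g : Type*) [LieRing g] [LieAlgebra ℝ g] : Prop :=
  ∃ s : ℕ, ascSeries g s = ⊤

/-- A (integrable) complex structure on a real Lie algebra. -/
structure ComplexStructure (g : Type*) [LieRing g] [LieAlgebra ℝ g] where
  J : g →ₗ[ℝ] g
  j_sq : ∀ X : g, J (J X) = -X
  integrable : ∀ X Y : g, ⁅X, Y⁆ + J ⁅J X, Y⁆ + J ⁅X, J Y⁆ - ⁅J X, J Y⁆ = 0

namespace ComplexStructure

variable {g g' : Type*} [LieRing g] [LieAlgebra ℝ g] [LieRing g'] [LieAlgebra ℝ g']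

/-- The ascending `J`-compatible series `a_k(J)`. -/
def aSeries (Jc : ComplexStructure g) : ℕ → Submodule ℝ g
  | 0 => ⊥
  | k + 1 =>
    { carrier := {X : g | (∀ Y : g, ⁅X, Y⁆ ∈ aSeries Jc k) ∧ (∀ Y : g, ⁅Jc.J X, Y⁆ ∈ aSeries Jc k)}
      add_mem' := fun ha hb => by
        refine ⟨fun Y => ?_, fun Y => ?_⟩
        · rw [add_lie]; exact Submodule.add_mem _ (ha.1 Y) (hb.1 Y)
        · rw [map_add, add_lie]; exact Submodule.add_mem _ (ha.2 Y) (hb.2 Y)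
      zero_mem' := by
        refine ⟨fun Y => ?_, fun Y => ?_⟩
        · rw [zero_lie]; exact Submodule.zero_mem _
        · rw [map_zero, zero_lie]; exact Submodule.zero_mem _
      smul_mem' := fun c x hx => by
        refine ⟨fun Y => ?_, fun Y => ?_⟩
        · rw [smul_lie]; exact Submodule.smul_mem _ c (hx.1 Y)
        · rw [map_smul, smul_lie]; exact Submodule.smul_mem _ c (hx.2 Y) }

/-- Quasi-nilpotent complex structure: `a₁(J) ≠ 0`. -/
def IsQuasiNilpotent (Jc : ComplexStructure g) : Prop := Jc.aSeries 1 ≠ ⊥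

/-- Strongly non-nilpotent complex structure: `a₁(J) = 0`. -/
def IsSnN (Jc : ComplexStructure g) : Prop := Jc.aSeries 1 = ⊥

/-- Weakly non-nilpotent complex structure: `a₁(J) ≠ 0` and the ascending compatible series
stabilizes strictly below `g`. -/
def IsWnN (Jc : ComplexStructure g) : Prop :=
  Jc.aSeries 1 ≠ ⊥ ∧ ∃ t : ℕ, Jc.aSeries t ≠ ⊤ ∧ ∀ l : ℕ, 1 ≤ l → Jc.aSeries (t + l) = Jc.aSeries t

/-- Non-nilpotent complex structure: the ascending compatible series never reaches `g`. -/
def IsNonNilpotent (Jc : ComplexStructure g) : Prop := ∀ t : ℕ, Jc.aSeries t ≠ ⊤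

/-- Equivalence of complex structures. -/
def Equiv (Jc : ComplexStructure g) (Jc' : ComplexStructure g') : Prop :=
  ∃ f : g ≃ₗ⁅ℝ⁆ g', ∀ X : g, f (Jc.J X) = Jc'.J (f X)

end ComplexStructure


/-- Complex conjugate of a complex-valued form. -/
def cF {M : Type*} (α : M → ℂ) : M → ℂ := fun X => (starRingEnd ℂ) (α X)

/-- Wedge product of two 1-forms, as a 2-form. -/
def w2 {M R : Type*} [CommRing R] (α β : M → R) (X Y : M) : R := α X * β Y - α Y * β X

/-- Wedge product of three 1-forms, as a 3-form. -/
def w3 {M R : Type*} [CommRing R] (α β γ : M → R) (X Y Z : M) : R :=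
  α X * w2 β γ Y Z - α Y * w2 β γ X Z + α Z * w2 β γ X Y

/-- Wedge product of four 1-forms, as a 4-form. -/
def w4 {M R : Type*} [CommRing R] (α β γ η : M → R) (W X Y Z : M) : R :=
  α W * w3 β γ η X Y Z - α X * w3 β γ η W Y Z + α Y * w3 β γ η W X Z - α Z * w3 β γ η W X Y

/-- Chevalley–Eilenberg differential of a 1-form: `dα(X,Y) = -α([X,Y])`. -/
def dd {g R : Type*} [LieRing g] [CommRing R] (α : g → R) (X Y : g) : R := -α ⁅X, Y⁆

variable {g : Type*} [LieRing g] [LieAlgebra ℝ g]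

/-- `ω` is a basis of (1,0)-forms for `(g,J)` (here `dim ℝ g = 8`): each `ω k` is of bidegree
(1,0) for `J`, and the joint map `g → ℂ⁴` is bijective (so that `{ω^k, ω̄^k}` is a basis of the
complexified dual). -/
def Is10Basis (Jc : ComplexStructure g) (ω : Fin 4 → (g →ₗ[ℝ] ℂ)) : Prop :=
  (∀ (k : Fin 4) (X : g), ω k (Jc.J X) = Complex.I * ω k X) ∧
  Function.Bijective (fun (X : g) (k : Fin 4) => ω k X)

/-- The complex structure equations (★):
`dω¹ = 0`, `dω² = ω¹³ + ω^{1 3̄}`, `dω³ = iε ω^{1 1̄} + iδ ω^{1 2̄} − iδ ω^{2 1̄}`,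
`dω⁴ = A ω¹² + B ω^{1 1̄} + ν (ω²³ + 2δε ω^{1 3̄} + ω^{2 3̄})`. -/
def StarEq (ω : Fin 4 → (g →ₗ[ℝ] ℂ)) (ε δ ν : ℝ) (A B : ℂ) : Prop :=
  (∀ X Y : g, dd (⇑(ω 0)) X Y = 0) ∧
  (∀ X Y : g, dd (⇑(ω 1)) X Y = w2 (⇑(ω 0)) (⇑(ω 2)) X Y + w2 (⇑(ω 0)) (cF ⇑(ω 2)) X Y) ∧
  (∀ X Y : g, dd (⇑(ω 2)) X Y
      = Complex.I * (ε : ℂ) * w2 (⇑(ω 0)) (cF ⇑(ω 0)) X Y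
        + Complex.I * (δ : ℂ) * w2 (⇑(ω 0)) (cF ⇑(ω 1)) X Y
        - Complex.I * (δ : ℂ) * w2 (⇑(ω 1)) (cF ⇑(ω 0)) X Y) ∧
  (∀ X Y : g, dd (⇑(ω 3)) X Y
      = A * w2 (⇑(ω 0)) (⇑(ω 1)) X Y + B * w2 (⇑(ω 0)) (cF ⇑(ω 0)) X Y
        + (ν : ℂ) * (w2 (⇑(ω 1)) (⇑(ω 2)) X Y
            + 2 * (δ : ℂ) * (ε : ℂ) * w2 (⇑(ω 0)) (cF ⇑(ω 2)) X Y
            + w2 (⇑(ω 1)) (cF ⇑(ω 2)) X Y))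

/-- The admissible range of the parameters `(ε,δ,ν,a,B)` in Theorem 3.1. -/
def Admissible (ε δ ν a : ℝ) (B : ℂ) : Prop :=
  (ε = 0 ∨ ε = 1) ∧ (δ = 1 ∨ δ = -1) ∧
  ((ν = 0 ∧ a = 0 ∧ B = 0) ∨
   (ν = 0 ∧ a = 0 ∧ B = 1) ∨
   ((ν = 0 ∨ ν = 1) ∧ a = 1 - ν ∧ (∃ b : ℝ, 0 ≤ b ∧ B = (b : ℂ)) ∧
      (ε = 0 → (B = 0 ∨ B = 1))) ∨
   (ν = 1 ∧ 0 < a ∧ (ε = 0 → (a = 1 ∧ 0 ≤ B.im))))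

/-- A pseudo-Kähler structure on `(g,J)`: a closed, `J`-invariant, nondegenerate 2-form. -/
structure PseudoKahlerForm (Jc : ComplexStructure g) where
  F : g →ₗ[ℝ] g →ₗ[ℝ] ℝ
  antisymm : ∀ X Y : g, F X Y = -F Y X
  compat : ∀ X Y : g, F (Jc.J X) (Jc.J Y) = F X Y
  closed : ∀ X Y Z : g, F ⁅X, Y⁆ Z - F ⁅X, Z⁆ Y + F ⁅Y, Z⁆ X = 0
  nondeg : ∀ X : g, (∀ Y : g, F X Y = 0) → X = 0


variable {g : Type*} [LieRing g] [LieAlgebra ℝ g] in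
/-- The image forms `F(ω'^i) = Σ_j λ^i_j ω^j` of a ℂ-linear map `F : g'^{1,0} → g^{1,0}`
determined by the matrix `Λ`. -/
def Fof (ω : Fin 4 → (g →ₗ[ℝ] ℂ)) (Λ : Matrix (Fin 4) (Fin 4) ℂ) (i : Fin 4) : g → ℂ :=
  fun X => ∑ j : Fin 4, Λ i j * ω j X

variable {g : Type*} [LieRing g] [LieAlgebra ℝ g] in
/-- The condition `d ∘ F = F ∘ d` for the map `F` determined by `Λ`, where the differentials
`dω'^i` on the source are given by the equations (★) with parameters `(ε',δ',ν',A',B')`. -/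
def Intertwines (ω : Fin 4 → (g →ₗ[ℝ] ℂ)) (Λ : Matrix (Fin 4) (Fin 4) ℂ)
    (ε' δ' ν' : ℝ) (A' B' : ℂ) : Prop :=
  (∀ X Y : g, dd (Fof ω Λ 0) X Y = 0) ∧
  (∀ X Y : g, dd (Fof ω Λ 1) X Y
      = w2 (Fof ω Λ 0) (Fof ω Λ 2) X Y + w2 (Fof ω Λ 0) (cF (Fof ω Λ 2)) X Y) ∧
  (∀ X Y : g, dd (Fof ω Λ 2) X Y
      = Complex.I * (ε' : ℂ) * w2 (Fof ω Λ 0) (cF (Fof ω Λ 0)) X Y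
        + Complex.I * (δ' : ℂ) * w2 (Fof ω Λ 0) (cF (Fof ω Λ 1)) X Y
        - Complex.I * (δ' : ℂ) * w2 (Fof ω Λ 1) (cF (Fof ω Λ 0)) X Y) ∧
  (∀ X Y : g, dd (Fof ω Λ 3) X Y
      = A' * w2 (Fof ω Λ 0) (Fof ω Λ 1) X Y + B' * w2 (Fof ω Λ 0) (cF (Fof ω Λ 0)) X Y
        + (ν' : ℂ) * (w2 (Fof ω Λ 1) (Fof ω Λ 2) X Y
            + 2 * (δ' : ℂ) * (ε' : ℂ) * w2 (Fof ω Λ 0) (cF (Fof ω Λ 2)) X Y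
            + w2 (Fof ω Λ 1) (cF (Fof ω Λ 2)) X Y))

/-- The triangular pattern of the matrix `Λ` obtained in Lemma 3.7. -/
def TriangularPat (Λ : Matrix (Fin 4) (Fin 4) ℂ) : Prop :=
  Λ 0 1 = 0 ∧ Λ 0 2 = 0 ∧ Λ 0 3 = 0 ∧ Λ 1 2 = 0 ∧ Λ 1 3 = 0 ∧
  Λ 2 0 = 0 ∧ Λ 2 1 = 0 ∧ Λ 2 3 = 0 ∧ Λ 3 2 = 0


section Aux

open ComplexConjugate

variable {g : Type*} [LieRing g] [LieAlgebra ℝ g]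

abbrev Uu (Λ : Matrix (Fin 4) (Fin 4) ℂ) (p : Fin 4) (z : Fin 4 → ℂ) : ℂ :=
  Λ p 0 * z 0 + Λ p 1 * z 1 + Λ p 2 * z 2 + Λ p 3 * z 3

abbrev Vv (Λ : Matrix (Fin 4) (Fin 4) ℂ) (p : Fin 4) (z : Fin 4 → ℂ) : ℂ :=
  conj (Λ p 0) * conj (z 0) + conj (Λ p 1) * conj (z 1) + conj (Λ p 2) * conj (z 2) +
    conj (Λ p 3) * conj (z 3)

abbrev D1f (z w : Fin 4 → ℂ) : ℂ :=
  z 0 * w 2 - z 2 * w 0 + (z 0 * conj (w 2) - w 0 * conj (z 2))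

abbrev D2f (ε δ : ℝ) (z w : Fin 4 → ℂ) : ℂ :=
  Complex.I * ε * (z 0 * conj (w 0) - w 0 * conj (z 0))
    + Complex.I * δ * (z 0 * conj (w 1) - w 0 * conj (z 1))
    - Complex.I * δ * (z 1 * conj (w 0) - w 1 * conj (z 0))

abbrev D3f (ε δ ν : ℝ) (A B : ℂ) (z w : Fin 4 → ℂ) : ℂ :=
  A * (z 0 * w 1 - z 1 * w 0) + B * (z 0 * conj (w 0) - w 0 * conj (z 0))
    + ν * (z 1 * w 2 - z 2 * w 1 + 2 * δ * ε * (z 0 * conj (w 2) - w 0 * conj (z 2))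
        + (z 1 * conj (w 2) - w 1 * conj (z 2)))

abbrev LHSf (Λ : Matrix (Fin 4) (Fin 4) ℂ) (i : Fin 4) (ε δ ν : ℝ) (A B : ℂ)
    (z w : Fin 4 → ℂ) : ℂ :=
  Λ i 1 * D1f z w + Λ i 2 * D2f ε δ z w + Λ i 3 * D3f ε δ ν A B z w


lemma conj_zero {z : ℂ} (h : (starRingEnd ℂ) z = 0) : z = 0 := by
  simpa using congrArg (starRingEnd ℂ) h

lemma mul3_zero {u v x : ℂ} (hu : u ≠ 0) (hv : v ≠ 0) (h : u * v * x = 0) : x = 0 := by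
  simpa [mul_eq_zero, hu, hv] using h

lemma mul4_zero {u v x y : ℂ} (hu : u ≠ 0) (hv : v ≠ 0) (hy : y ≠ 0)
    (h : u * v * (x * y) = 0) : x = 0 := by
  simpa [mul_eq_zero, hu, hv, hy] using h

lemma imag_real_zero {r s : ℝ} (h : Complex.I * (r:ℂ) = (s:ℂ)) : r = 0 ∧ s = 0 := by
  constructor
  · simpa using congrArg Complex.im h
  · simpa using (congrArg Complex.re h).symm

lemma det_pattern (M : Matrix (Fin 4) (Fin 4) ℂ) (h1 : M 0 1 = 0) (h2 : M 0 2 = 0)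
    (h3 : M 0 3 = 0) (h4 : M 1 2 = 0) (h5 : M 1 3 = 0) (h6 : M 2 0 = 0) (h7 : M 2 1 = 0)
    (h8 : M 2 3 = 0) (h9 : M 3 2 = 0) : M.det = M 0 0 * M 1 1 * M 2 2 * M 3 3 := by
  simp [Matrix.det_succ_row_zero, Fin.sum_univ_succ, h1, h2, h3, h4, h5, h6, h7, h8, h9,
    show (Fin.succ 2 : Fin 4) = 3 from rfl, show (Fin.castSucc 2 : Fin 4) = 2 from rfl]
  ring

abbrev Key0 (Λ : Matrix (Fin 4) (Fin 4) ℂ) (ε δ ν : ℝ) (A B : ℂ) : Prop :=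
  ∀ z w : Fin 4 → ℂ, LHSf Λ 0 ε δ ν A B z w = 0

abbrev Key1 (Λ : Matrix (Fin 4) (Fin 4) ℂ) (ε δ ν : ℝ) (A B : ℂ) : Prop :=
  ∀ z w : Fin 4 → ℂ, LHSf Λ 1 ε δ ν A B z w
    = Uu Λ 0 z * Uu Λ 2 w - Uu Λ 0 w * Uu Λ 2 z
      + (Uu Λ 0 z * Vv Λ 2 w - Uu Λ 0 w * Vv Λ 2 z)

abbrev Key2 (Λ : Matrix (Fin 4) (Fin 4) ℂ) (ε δ ν : ℝ) (A B : ℂ) (ε' δ' : ℝ) : Prop :=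
  ∀ z w : Fin 4 → ℂ, LHSf Λ 2 ε δ ν A B z w
    = Complex.I * ε' * (Uu Λ 0 z * Vv Λ 0 w - Uu Λ 0 w * Vv Λ 0 z)
      + Complex.I * δ' * (Uu Λ 0 z * Vv Λ 1 w - Uu Λ 0 w * Vv Λ 1 z)
      - Complex.I * δ' * (Uu Λ 1 z * Vv Λ 0 w - Uu Λ 1 w * Vv Λ 0 z)

abbrev Key3 (Λ : Matrix (Fin 4) (Fin 4) ℂ) (ε δ ν : ℝ) (A B : ℂ)
    (ε' δ' ν' : ℝ) (A' B' : ℂ) : Prop :=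
  ∀ z w : Fin 4 → ℂ, LHSf Λ 3 ε δ ν A B z w
    = A' * (Uu Λ 0 z * Uu Λ 1 w - Uu Λ 0 w * Uu Λ 1 z)
      + B' * (Uu Λ 0 z * Vv Λ 0 w - Uu Λ 0 w * Vv Λ 0 z)
      + ν' * (Uu Λ 1 z * Uu Λ 2 w - Uu Λ 1 w * Uu Λ 2 z
          + 2 * δ' * ε' * (Uu Λ 0 z * Vv Λ 2 w - Uu Λ 0 w * Vv Λ 2 z)
          + (Uu Λ 1 z * Vv Λ 2 w - Uu Λ 1 w * Vv Λ 2 z))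

set_option maxHeartbeats 1000000 in
theorem keys_of_intertwines
    (Jc : ComplexStructure g) (ω : Fin 4 → (g →ₗ[ℝ] ℂ)) (Λ : Matrix (Fin 4) (Fin 4) ℂ)
    (ε δ ν : ℝ) (A B : ℂ) (ε' δ' ν' : ℝ) (A' B' : ℂ)
    (hωb : Is10Basis Jc ω) (hse : StarEq ω ε δ ν A B)
    (hI : Intertwines ω Λ ε' δ' ν' A' B') :
    Key0 Λ ε δ ν A B ∧ Key1 Λ ε δ ν A B ∧ Key2 Λ ε δ ν A B ε' δ' ∧
    Key3 Λ ε δ ν A B ε' δ' ν' A' B' := by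
  have hsurj : Function.Surjective (fun (X : g) (k : Fin 4) => ω k X) := hωb.2.surjective
  refine ⟨?_, ?_, ?_, ?_⟩
  · intro z w
    obtain ⟨X, hX⟩ := hsurj z
    obtain ⟨Y, hY⟩ := hsurj w
    have hz : ∀ k, z k = ω k X := fun k => (congrFun hX k).symm
    have hw : ∀ k, w k = ω k Y := fun k => (congrFun hY k).symm
    have e0 := hse.1 X Y
    have e1 := hse.2.1 X Y
    have e2 := hse.2.2.1 X Y
    have e3 := hse.2.2.2 X Y
    have h := hI.1 X Y
    simp only [dd, w2, cF, Fof, Fin.sum_univ_four, map_add, map_mul] at e0 e1 e2 e3 h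
    simp only [LHSf, D1f, D2f, D3f, Uu, Vv, hz, hw]
    linear_combination h - Λ 0 0 * e0 - Λ 0 1 * e1 - Λ 0 2 * e2 - Λ 0 3 * e3
  · intro z w
    obtain ⟨X, hX⟩ := hsurj z
    obtain ⟨Y, hY⟩ := hsurj w
    have hz : ∀ k, z k = ω k X := fun k => (congrFun hX k).symm
    have hw : ∀ k, w k = ω k Y := fun k => (congrFun hY k).symm
    have e0 := hse.1 X Y
    have e1 := hse.2.1 X Y
    have e2 := hse.2.2.1 X Y
    have e3 := hse.2.2.2 X Y
    have h := hI.2.1 X Y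
    simp only [dd, w2, cF, Fof, Fin.sum_univ_four, map_add, map_mul] at e0 e1 e2 e3 h
    simp only [LHSf, D1f, D2f, D3f, Uu, Vv, hz, hw]
    linear_combination h - Λ 1 0 * e0 - Λ 1 1 * e1 - Λ 1 2 * e2 - Λ 1 3 * e3
  · intro z w
    obtain ⟨X, hX⟩ := hsurj z
    obtain ⟨Y, hY⟩ := hsurj w
    have hz : ∀ k, z k = ω k X := fun k => (congrFun hX k).symm
    have hw : ∀ k, w k = ω k Y := fun k => (congrFun hY k).symm
    have e0 := hse.1 X Y
    have e1 := hse.2.1 X Y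
    have e2 := hse.2.2.1 X Y
    have e3 := hse.2.2.2 X Y
    have h := hI.2.2.1 X Y
    simp only [dd, w2, cF, Fof, Fin.sum_univ_four, map_add, map_mul] at e0 e1 e2 e3 h
    simp only [LHSf, D1f, D2f, D3f, Uu, Vv, hz, hw]
    linear_combination h - Λ 2 0 * e0 - Λ 2 1 * e1 - Λ 2 2 * e2 - Λ 2 3 * e3
  · intro z w
    obtain ⟨X, hX⟩ := hsurj z
    obtain ⟨Y, hY⟩ := hsurj w
    have hz : ∀ k, z k = ω k X := fun k => (congrFun hX k).symm
    have hw : ∀ k, w k = ω k Y := fun k => (congrFun hY k).symm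
    have e0 := hse.1 X Y
    have e1 := hse.2.1 X Y
    have e2 := hse.2.2.1 X Y
    have e3 := hse.2.2.2 X Y
    have h := hI.2.2.2 X Y
    simp only [dd, w2, cF, Fof, Fin.sum_univ_four, map_add, map_mul] at e0 e1 e2 e3 h
    simp only [LHSf, D1f, D2f, D3f, Uu, Vv, hz, hw]
    linear_combination h - Λ 3 0 * e0 - Λ 3 1 * e1 - Λ 3 2 * e2 - Λ 3 3 * e3


set_option maxHeartbeats 2000000 in
theorem triangular_of_keys {Λ : Matrix (Fin 4) (Fin 4) ℂ}
    {ε δ ν : ℝ} {A B : ℂ} {ε' δ' ν' : ℝ} {A' B' : ℂ}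
    (hdet : Λ.det ≠ 0) (hδ : δ = 1 ∨ δ = -1) (hδ' : δ' = 1 ∨ δ' = -1)
    (k0 : Key0 Λ ε δ ν A B) (k1 : Key1 Λ ε δ ν A B)
    (k2 : Key2 Λ ε δ ν A B ε' δ') (k3 : Key3 Λ ε δ ν A B ε' δ' ν' A' B') :
    TriangularPat Λ := by
  have hδc : (δ:ℂ) ≠ 0 := by rcases hδ with h|h <;> norm_num [h]
  have hδ'c : (δ':ℂ) ≠ 0 := by rcases hδ' with h|h <;> norm_num [h]
  have hz01 : Λ 0 1 = 0 := by
    have E1 := k0 (Pi.single 0 1) (Pi.single 2 1)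
    have E2 := k0 (Pi.single 0 1) (Pi.single 2 Complex.I)
    have E3 := k0 (Pi.single 0 Complex.I) (Pi.single 2 1)
    have E4 := k0 (Pi.single 0 Complex.I) (Pi.single 2 Complex.I)
    simp only [LHSf, D1f, D2f, D3f, Uu, Vv, Pi.single_apply, Fin.reduceEq,
      if_true, if_false, ite_true, ite_false, map_zero, map_one, Complex.conj_I,
      mul_zero, zero_mul, mul_one, one_mul, add_zero, zero_add, sub_zero, zero_sub,
      mul_neg, neg_mul, neg_neg, neg_zero] at E1 E2 E3 E4
    linear_combination (E1 - Complex.I*E2 - Complex.I*E3 - E4)/4 + ((1/2)*Λ 0 1 + (-1/2)*Λ 0 3*(δ:ℂ)*(ε:ℂ)*(ν:ℂ)) * Complex.I_sq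
  have e02 : Complex.I*(δ:ℂ)*Λ 0 2 = 0 := by
    have E1 := k0 (Pi.single 0 1) (Pi.single 1 1)
    have E2 := k0 (Pi.single 0 1) (Pi.single 1 Complex.I)
    have E3 := k0 (Pi.single 0 Complex.I) (Pi.single 1 1)
    have E4 := k0 (Pi.single 0 Complex.I) (Pi.single 1 Complex.I)
    simp only [LHSf, D1f, D2f, D3f, Uu, Vv, Pi.single_apply, Fin.reduceEq,
      if_true, if_false, ite_true, ite_false, map_zero, map_one, Complex.conj_I,
      mul_zero, zero_mul, mul_one, one_mul, add_zero, zero_add, sub_zero, zero_sub,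
      mul_neg, neg_mul, neg_neg, neg_zero] at E1 E2 E3 E4
    linear_combination (E1 + Complex.I*E2 - Complex.I*E3 + E4)/4 + ((1/2)*Λ 0 2*(δ:ℂ)*Complex.I + (-1/4)*Λ 0 3*A) * Complex.I_sq
  have hz02 : Λ 0 2 = 0 := by simpa [mul_eq_zero, hδc, Complex.I_ne_zero] using e02
  have e30 : Λ 0 3*conj (Λ 2 0) = 0 := by
    have E1 := k1 (Pi.single 3 1) (Pi.single 0 1)
    have E2 := k1 (Pi.single 3 1) (Pi.single 0 Complex.I)
    have E3 := k1 (Pi.single 3 Complex.I) (Pi.single 0 1)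
    have E4 := k1 (Pi.single 3 Complex.I) (Pi.single 0 Complex.I)
    simp only [LHSf, D1f, D2f, D3f, Uu, Vv, Pi.single_apply, Fin.reduceEq,
      if_true, if_false, ite_true, ite_false, map_zero, map_one, Complex.conj_I,
      mul_zero, zero_mul, mul_one, one_mul, add_zero, zero_add, sub_zero, zero_sub,
      mul_neg, neg_mul, neg_neg, neg_zero] at E1 E2 E3 E4
    linear_combination -((E1 + Complex.I*E2 - Complex.I*E3 + E4)/4) + ((1/4)*Λ 0 0*Λ 2 3 + (1/4)*Λ 0 0*conj (Λ 2 3) + (-1/4)*Λ 0 3*Λ 2 0 + (3/4)*Λ 0 3*conj (Λ 2 0)) * Complex.I_sq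
  have e31 : Λ 0 3*conj (Λ 2 1) = 0 := by
    have E1 := k1 (Pi.single 3 1) (Pi.single 1 1)
    have E2 := k1 (Pi.single 3 1) (Pi.single 1 Complex.I)
    have E3 := k1 (Pi.single 3 Complex.I) (Pi.single 1 1)
    have E4 := k1 (Pi.single 3 Complex.I) (Pi.single 1 Complex.I)
    simp only [LHSf, D1f, D2f, D3f, Uu, Vv, Pi.single_apply, Fin.reduceEq,
      if_true, if_false, ite_true, ite_false, map_zero, map_one, Complex.conj_I,
      mul_zero, zero_mul, mul_one, one_mul, add_zero, zero_add, sub_zero, zero_sub,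
      mul_neg, neg_mul, neg_neg, neg_zero] at E1 E2 E3 E4
    linear_combination -((E1 + Complex.I*E2 - Complex.I*E3 + E4)/4) + ((1/4)*Λ 0 1*Λ 2 3 + (1/4)*Λ 0 1*conj (Λ 2 3) + (-1/4)*Λ 0 3*Λ 2 1 + (3/4)*Λ 0 3*conj (Λ 2 1)) * Complex.I_sq
  have e32 : Λ 0 3*conj (Λ 2 2) = 0 := by
    have E1 := k1 (Pi.single 3 1) (Pi.single 2 1)
    have E2 := k1 (Pi.single 3 1) (Pi.single 2 Complex.I)
    have E3 := k1 (Pi.single 3 Complex.I) (Pi.single 2 1)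
    have E4 := k1 (Pi.single 3 Complex.I) (Pi.single 2 Complex.I)
    simp only [LHSf, D1f, D2f, D3f, Uu, Vv, Pi.single_apply, Fin.reduceEq,
      if_true, if_false, ite_true, ite_false, map_zero, map_one, Complex.conj_I,
      mul_zero, zero_mul, mul_one, one_mul, add_zero, zero_add, sub_zero, zero_sub,
      mul_neg, neg_mul, neg_neg, neg_zero] at E1 E2 E3 E4
    linear_combination -((E1 + Complex.I*E2 - Complex.I*E3 + E4)/4) + ((1/4)*Λ 0 2*Λ 2 3 + (1/4)*Λ 0 2*conj (Λ 2 3) + (-1/4)*Λ 0 3*Λ 2 2 + (3/4)*Λ 0 3*conj (Λ 2 2)) * Complex.I_sq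
  have e33 : Λ 0 3*conj (Λ 2 3) = 0 := by
    have E1 := k1 (Pi.single 3 1) (Pi.single 3 1)
    have E2 := k1 (Pi.single 3 1) (Pi.single 3 Complex.I)
    have E3 := k1 (Pi.single 3 Complex.I) (Pi.single 3 1)
    have E4 := k1 (Pi.single 3 Complex.I) (Pi.single 3 Complex.I)
    simp only [LHSf, D1f, D2f, D3f, Uu, Vv, Pi.single_apply, Fin.reduceEq,
      if_true, if_false, ite_true, ite_false, map_zero, map_one, Complex.conj_I,
      mul_zero, zero_mul, mul_one, one_mul, add_zero, zero_add, sub_zero, zero_sub,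
      mul_neg, neg_mul, neg_neg, neg_zero] at E1 E2 E3 E4
    linear_combination -((E1 + Complex.I*E2 - Complex.I*E3 + E4)/4) + (Λ 0 3*conj (Λ 2 3)) * Complex.I_sq
  have hz03 : Λ 0 3 = 0 := by
    by_contra hc
    have r0 : Λ 2 0 = 0 := conj_zero ((mul_eq_zero.mp e30).resolve_left hc)
    have r1 : Λ 2 1 = 0 := conj_zero ((mul_eq_zero.mp e31).resolve_left hc)
    have r2 : Λ 2 2 = 0 := conj_zero ((mul_eq_zero.mp e32).resolve_left hc)
    have r3 : Λ 2 3 = 0 := conj_zero ((mul_eq_zero.mp e33).resolve_left hc)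
    exact hdet (Matrix.det_eq_zero_of_row_eq_zero 2 (fun j => by fin_cases j <;> assumption))
  have h00 : Λ 0 0 ≠ 0 := by
    intro h
    exact hdet (Matrix.det_eq_zero_of_row_eq_zero 0 (fun j => by fin_cases j <;> assumption))
  have h00c : conj (Λ 0 0) ≠ 0 := fun h => h00 (conj_zero h)
  have hz01c : conj (Λ 0 1) = 0 := by rw [hz01]; exact map_zero _
  have hz21 : Λ 2 1 = 0 := by
    have E1 := k2 (Pi.single 0 1) (Pi.single 2 1)
    have E2 := k2 (Pi.single 0 1) (Pi.single 2 Complex.I)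
    have E3 := k2 (Pi.single 0 Complex.I) (Pi.single 2 1)
    have E4 := k2 (Pi.single 0 Complex.I) (Pi.single 2 Complex.I)
    simp only [LHSf, D1f, D2f, D3f, Uu, Vv, Pi.single_apply, Fin.reduceEq,
      if_true, if_false, ite_true, ite_false, map_zero, map_one, Complex.conj_I,
      mul_zero, zero_mul, mul_one, one_mul, add_zero, zero_add, sub_zero, zero_sub,
      mul_neg, neg_mul, neg_neg, neg_zero] at E1 E2 E3 E4
    linear_combination (E1 - Complex.I*E2 - Complex.I*E3 - E4)/4 + ((1/4)*Λ 0 0*conj (Λ 0 2)*(ε':ℂ)*Complex.I + (1/4)*Λ 0 0*conj (Λ 1 2)*(δ':ℂ)*Complex.I + (-1/4)*Λ 0 2*conj (Λ 0 0)*(ε':ℂ)*Complex.I + (-1/4)*Λ 0 2*conj (Λ 1 0)*(δ':ℂ)*Complex.I + (-1/4)*Λ 1 0*conj (Λ 0 2)*(δ':ℂ)*Complex.I + (1/4)*Λ 1 2*conj (Λ 0 0)*(δ':ℂ)*Complex.I + (1/2)*Λ 2 1 + (-1/2)*Λ 2 3*(δ:ℂ)*(ε:ℂ)*(ν:ℂ))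 * Complex.I_sq
  have hz21c : conj (Λ 2 1) = 0 := by rw [hz21]; exact map_zero _
  have e12 : Λ 1 2*conj (Λ 0 0)*(δ':ℂ)*Complex.I = 0 := by
    have E1 := k2 (Pi.single 2 1) (Pi.single 0 1)
    have E2 := k2 (Pi.single 2 1) (Pi.single 0 Complex.I)
    have E3 := k2 (Pi.single 2 Complex.I) (Pi.single 0 1)
    have E4 := k2 (Pi.single 2 Complex.I) (Pi.single 0 Complex.I)
    simp only [LHSf, D1f, D2f, D3f, Uu, Vv, Pi.single_apply, Fin.reduceEq,
      if_true, if_false, ite_true, ite_false, map_zero, map_one, Complex.conj_I,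
      mul_zero, zero_mul, mul_one, one_mul, add_zero, zero_add, sub_zero, zero_sub,
      mul_neg, neg_mul, neg_neg, neg_zero] at E1 E2 E3 E4
    linear_combination (E1 + Complex.I*E2 - Complex.I*E3 + E4)/4 + (conj (Λ 0 0)*(ε':ℂ)*Complex.I + conj (Λ 1 0)*(δ':ℂ)*Complex.I) * hz02 + ((-1/4)*Λ 0 0*conj (Λ 0 2)*(ε':ℂ)*Complex.I + (-1/4)*Λ 0 0*conj (Λ 1 2)*(δ':ℂ)*Complex.I + (-3/4)*Λ 0 2*conj (Λ 0 0)*(ε':ℂ)*Complex.I + (-3/4)*Λ 0 2*conj (Λ 1 0)*(δ':ℂ)*Complex.I + (1/4)*Λ 1 0*conj (Λ 0 2)*(δ':ℂ)*Complex.I + (3/4)*Λ 1 2*conj (Λ 0 0)*(δ':ℂ)*Complex.I + (1/2)*Λ 2 1 + (1/2)*Λ 2 3*(δ:ℂ)*(ε:ℂ)*(ν:ℂ)) * Complex.I_sq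
  have hz12 : Λ 1 2 = 0 := by simpa [mul_eq_zero, hδ'c, h00c, Complex.I_ne_zero] using e12
  have e13 : Λ 1 3*conj (Λ 0 0)*(δ':ℂ)*Complex.I = 0 := by
    have E1 := k2 (Pi.single 3 1) (Pi.single 0 1)
    have E2 := k2 (Pi.single 3 1) (Pi.single 0 Complex.I)
    have E3 := k2 (Pi.single 3 Complex.I) (Pi.single 0 1)
    have E4 := k2 (Pi.single 3 Complex.I) (Pi.single 0 Complex.I)
    simp only [LHSf, D1f, D2f, D3f, Uu, Vv, Pi.single_apply, Fin.reduceEq,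
      if_true, if_false, ite_true, ite_false, map_zero, map_one, Complex.conj_I,
      mul_zero, zero_mul, mul_one, one_mul, add_zero, zero_add, sub_zero, zero_sub,
      mul_neg, neg_mul, neg_neg, neg_zero] at E1 E2 E3 E4
    linear_combination (E1 + Complex.I*E2 - Complex.I*E3 + E4)/4 + (conj (Λ 0 0)*(ε':ℂ)*Complex.I + conj (Λ 1 0)*(δ':ℂ)*Complex.I) * hz03 + ((-1/4)*Λ 0 0*conj (Λ 0 3)*(ε':ℂ)*Complex.I + (-1/4)*Λ 0 0*conj (Λ 1 3)*(δ':ℂ)*Complex.I + (-3/4)*Λ 0 3*conj (Λ 0 0)*(ε':ℂ)*Complex.I + (-3/4)*Λ 0 3*conj (Λ 1 0)*(δ':ℂ)*Complex.I + (1/4)*Λ 1 0*conj (Λ 0 3)*(δ':ℂ)*Complex.I + (3/4)*Λ 1 3*conj (Λ 0 0)*(δ':ℂ)*Complex.I) * Complex.I_sq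
  have hz13 : Λ 1 3 = 0 := by simpa [mul_eq_zero, hδ'c, h00c, Complex.I_ne_zero] using e13
  have e23 : Λ 0 0*Λ 2 3 = 0 := by
    have E1 := k1 (Pi.single 0 1) (Pi.single 3 1)
    have E2 := k1 (Pi.single 0 1) (Pi.single 3 Complex.I)
    have E3 := k1 (Pi.single 0 Complex.I) (Pi.single 3 1)
    have E4 := k1 (Pi.single 0 Complex.I) (Pi.single 3 Complex.I)
    simp only [LHSf, D1f, D2f, D3f, Uu, Vv, Pi.single_apply, Fin.reduceEq,
      if_true, if_false, ite_true, ite_false, map_zero, map_one, Complex.conj_I,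
      mul_zero, zero_mul, mul_one, one_mul, add_zero, zero_add, sub_zero, zero_sub,
      mul_neg, neg_mul, neg_neg, neg_zero] at E1 E2 E3 E4
    linear_combination -((E1 - Complex.I*E2 - Complex.I*E3 - E4)/4) + (Λ 2 0) * hz03 + ((3/4)*Λ 0 0*Λ 2 3 + (-1/4)*Λ 0 0*conj (Λ 2 3) + (-3/4)*Λ 0 3*Λ 2 0 + (1/4)*Λ 0 3*conj (Λ 2 0)) * Complex.I_sq
  have hz23 : Λ 2 3 = 0 := (mul_eq_zero.mp e23).resolve_left h00
  have e20 : Λ 0 0*conj (Λ 2 0) = 0 := by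
    have E1 := k1 (Pi.single 0 1) (Pi.single 0 1)
    have E2 := k1 (Pi.single 0 1) (Pi.single 0 Complex.I)
    have E3 := k1 (Pi.single 0 Complex.I) (Pi.single 0 1)
    have E4 := k1 (Pi.single 0 Complex.I) (Pi.single 0 Complex.I)
    simp only [LHSf, D1f, D2f, D3f, Uu, Vv, Pi.single_apply, Fin.reduceEq,
      if_true, if_false, ite_true, ite_false, map_zero, map_one, Complex.conj_I,
      mul_zero, zero_mul, mul_one, one_mul, add_zero, zero_add, sub_zero, zero_sub,
      mul_neg, neg_mul, neg_neg, neg_zero] at E1 E2 E3 E4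
    linear_combination -((E1 + Complex.I*E2 - Complex.I*E3 + E4)/4) + ((ε:ℂ)*Complex.I) * hz12 + (B) * hz13 + (Λ 0 0*conj (Λ 2 0) + -Λ 1 2*(ε:ℂ)*Complex.I + -Λ 1 3*B) * Complex.I_sq
  have hz20 : Λ 2 0 = 0 := conj_zero ((mul_eq_zero.mp e20).resolve_left h00)
  have f32 : Λ 3 2*(δ:ℂ)*Complex.I = 0 := by
    have E1 := k3 (Pi.single 0 1) (Pi.single 1 1)
    have E2 := k3 (Pi.single 0 1) (Pi.single 1 Complex.I)
    have E3 := k3 (Pi.single 0 Complex.I) (Pi.single 1 1)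
    have E4 := k3 (Pi.single 0 Complex.I) (Pi.single 1 Complex.I)
    simp only [LHSf, D1f, D2f, D3f, Uu, Vv, Pi.single_apply, Fin.reduceEq,
      if_true, if_false, ite_true, ite_false, map_zero, map_one, Complex.conj_I,
      mul_zero, zero_mul, mul_one, one_mul, add_zero, zero_add, sub_zero, zero_sub,
      mul_neg, neg_mul, neg_neg, neg_zero] at E1 E2 E3 E4
    linear_combination (E1 + Complex.I*E2 - Complex.I*E3 + E4)/4 + (Λ 0 0*B') * hz01c + (2*Λ 0 0*(δ':ℂ)*(ε':ℂ)*(ν':ℂ) + Λ 1 0*(ν':ℂ)) * hz21c + ((1/4)*Λ 0 0*Λ 1 1*A' + (-3/4)*Λ 0 0*conj (Λ 0 1)*B' + (-3/2)*Λ 0 0*conj (Λ 2 1)*(δ':ℂ)*(ε':ℂ)*(ν':ℂ) + (-1/4)*Λ 0 1*Λ 1 0*A' + (-1/4)*Λ 0 1*conj (Λ 0 0)*B' + (-1/2)*Λ 0 1*conj (Λ 2 0)*(δ':ℂ)*(ε':ℂ)*(ν':ℂ) + (1/4)*Λ 1 0*Λ 2 1*(ν':ℂ) + (-3/4)*Λ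 1 0*conj (Λ 2 1)*(ν':ℂ) + (-1/4)*Λ 1 1*Λ 2 0*(ν':ℂ) + (-1/4)*Λ 1 1*conj (Λ 2 0)*(ν':ℂ) + (1/2)*Λ 3 2*(δ:ℂ)*Complex.I + (-1/4)*Λ 3 3*A) * Complex.I_sq
  have hz32 : Λ 3 2 = 0 := by simpa [mul_eq_zero, hδc, Complex.I_ne_zero] using f32
  exact ⟨hz01, hz02, hz03, hz12, hz13, hz20, hz21, hz23, hz32⟩

set_option maxHeartbeats 2000000 in
theorem relations_of_keys {Λ : Matrix (Fin 4) (Fin 4) ℂ}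
    {ε δ ν : ℝ} {A B : ℂ} {ε' δ' ν' : ℝ} {A' B' : ℂ}
    (hdet : Λ.det ≠ 0)
    (hε : ε = 0 ∨ ε = 1) (hδ : δ = 1 ∨ δ = -1)
    (hε' : ε' = 0 ∨ ε' = 1) (hδ' : δ' = 1 ∨ δ' = -1)
    (k1 : Key1 Λ ε δ ν A B)
    (k2 : Key2 Λ ε δ ν A B ε' δ') (k3 : Key3 Λ ε δ ν A B ε' δ' ν' A' B')
    (hp : TriangularPat Λ) :
    ε' = ε ∧ δ' = δ ∧ Complex.normSq (Λ 0 0) = 1 ∧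
    Λ 2 2 = ((Λ 2 2).re : ℂ) ∧ (Λ 2 2).re ≠ 0 ∧
    Λ 1 1 = Λ 0 0 * Λ 2 2 ∧
    ε * (1 - (Λ 2 2).re) = 0 ∧
    (Λ 0 0 * conj (Λ 1 0)).im = 0 ∧
    Λ 1 1 * Λ 3 1 - (ν:ℂ) * Λ 1 0 * Λ 3 3 = 0 ∧
    A' = A * Λ 3 3 / (Λ 0 0 ^ 2 * Λ 2 2) ∧
    B' = B * Λ 3 3 ∧
    (ν':ℂ) = (ν:ℂ) * Λ 3 3 / (Λ 0 0 * Λ 2 2 ^ 2) := by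
  obtain ⟨hz01, hz02, hz03, hz12, hz13, hz20, hz21, hz23, hz32⟩ := hp
  have hz01c : conj (Λ 0 1) = 0 := by rw [hz01]; exact map_zero _
  have hz02c : conj (Λ 0 2) = 0 := by rw [hz02]; exact map_zero _
  have hz03c : conj (Λ 0 3) = 0 := by rw [hz03]; exact map_zero _
  have hz12c : conj (Λ 1 2) = 0 := by rw [hz12]; exact map_zero _
  have hz13c : conj (Λ 1 3) = 0 := by rw [hz13]; exact map_zero _
  have hz20c : conj (Λ 2 0) = 0 := by rw [hz20]; exact map_zero _
  have hz21c : conj (Λ 2 1) = 0 := by rw [hz21]; exact map_zero _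
  have hz23c : conj (Λ 2 3) = 0 := by rw [hz23]; exact map_zero _
  have hz32c : conj (Λ 3 2) = 0 := by rw [hz32]; exact map_zero _
  have hdd : Λ.det = Λ 0 0 * Λ 1 1 * Λ 2 2 * Λ 3 3 :=
    det_pattern Λ hz01 hz02 hz03 hz12 hz13 hz20 hz21 hz23 hz32
  have h00 : Λ 0 0 ≠ 0 := fun h => hdet (by rw [hdd, h]; ring)
  have h11 : Λ 1 1 ≠ 0 := fun h => hdet (by rw [hdd, h]; ring)
  have h22 : Λ 2 2 ≠ 0 := fun h => hdet (by rw [hdd, h]; ring)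
  have h33 : Λ 3 3 ≠ 0 := fun h => hdet (by rw [hdd, h]; ring)
  have h00c : conj (Λ 0 0) ≠ 0 := fun h => h00 (conj_zero h)
  have e_a : Λ 1 1 = Λ 0 0*Λ 2 2 := by
    have E1 := k1 (Pi.single 0 1) (Pi.single 2 1)
    have E2 := k1 (Pi.single 0 1) (Pi.single 2 Complex.I)
    have E3 := k1 (Pi.single 0 Complex.I) (Pi.single 2 1)
    have E4 := k1 (Pi.single 0 Complex.I) (Pi.single 2 Complex.I)
    simp only [LHSf, D1f, D2f, D3f, Uu, Vv, Pi.single_apply, Fin.reduceEq,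
      if_true, if_false, ite_true, ite_false, map_zero, map_one, Complex.conj_I,
      mul_zero, zero_mul, mul_one, one_mul, add_zero, zero_add, sub_zero, zero_sub,
      mul_neg, neg_mul, neg_neg, neg_zero] at E1 E2 E3 E4
    linear_combination (E1 - Complex.I*E2 - Complex.I*E3 - E4)/4 + (-Λ 2 0) * hz02 + ((-3/4)*Λ 0 0*Λ 2 2 + (1/4)*Λ 0 0*conj (Λ 2 2) + (3/4)*Λ 0 2*Λ 2 0 + (-1/4)*Λ 0 2*conj (Λ 2 0) + (1/2)*Λ 1 1 + (-1/2)*Λ 1 3*(δ:ℂ)*(ε:ℂ)*(ν:ℂ)) * Complex.I_sq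
  have e_b : Λ 1 1 = Λ 0 0*conj (Λ 2 2) := by
    have E1 := k1 (Pi.single 0 1) (Pi.single 2 1)
    have E2 := k1 (Pi.single 0 1) (Pi.single 2 Complex.I)
    have E3 := k1 (Pi.single 0 Complex.I) (Pi.single 2 1)
    have E4 := k1 (Pi.single 0 Complex.I) (Pi.single 2 Complex.I)
    simp only [LHSf, D1f, D2f, D3f, Uu, Vv, Pi.single_apply, Fin.reduceEq,
      if_true, if_false, ite_true, ite_false, map_zero, map_one, Complex.conj_I,
      mul_zero, zero_mul, mul_one, one_mul, add_zero, zero_add, sub_zero, zero_sub,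
      mul_neg, neg_mul, neg_neg, neg_zero] at E1 E2 E3 E4
    linear_combination (E1 + Complex.I*E2 - Complex.I*E3 + E4)/4 + ((-2)*(δ:ℂ)*(ε:ℂ)*(ν:ℂ)) * hz13 + ((1/4)*Λ 0 0*Λ 2 2 + (-3/4)*Λ 0 0*conj (Λ 2 2) + (-1/4)*Λ 0 2*Λ 2 0 + (-1/4)*Λ 0 2*conj (Λ 2 0) + (1/2)*Λ 1 1 + (3/2)*Λ 1 3*(δ:ℂ)*(ε:ℂ)*(ν:ℂ)) * Complex.I_sq
  have e_c : Λ 2 2*(δ:ℂ)*Complex.I = Λ 0 0*conj (Λ 1 1)*(δ':ℂ)*Complex.I := by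
    have E1 := k2 (Pi.single 0 1) (Pi.single 1 1)
    have E2 := k2 (Pi.single 0 1) (Pi.single 1 Complex.I)
    have E3 := k2 (Pi.single 0 Complex.I) (Pi.single 1 1)
    have E4 := k2 (Pi.single 0 Complex.I) (Pi.single 1 Complex.I)
    simp only [LHSf, D1f, D2f, D3f, Uu, Vv, Pi.single_apply, Fin.reduceEq,
      if_true, if_false, ite_true, ite_false, map_zero, map_one, Complex.conj_I,
      mul_zero, zero_mul, mul_one, one_mul, add_zero, zero_add, sub_zero, zero_sub,
      mul_neg, neg_mul, neg_neg, neg_zero] at E1 E2 E3 E4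
    linear_combination (E1 + Complex.I*E2 - Complex.I*E3 + E4)/4 + (Λ 0 0*(ε':ℂ)*Complex.I + -Λ 1 0*(δ':ℂ)*Complex.I) * hz01c + ((-3/4)*Λ 0 0*conj (Λ 0 1)*(ε':ℂ)*Complex.I + (-3/4)*Λ 0 0*conj (Λ 1 1)*(δ':ℂ)*Complex.I + (-1/4)*Λ 0 1*conj (Λ 0 0)*(ε':ℂ)*Complex.I + (-1/4)*Λ 0 1*conj (Λ 1 0)*(δ':ℂ)*Complex.I + (3/4)*Λ 1 0*conj (Λ 0 1)*(δ':ℂ)*Complex.I + (1/4)*Λ 1 1*conj (Λ 0 0)*(δ':ℂ)*Complex.I + (1/2)*Λ 2 2*(δ:ℂ)*Complex.I + (-1/4)*Λ 2 3*A) * Complex.I_sq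
  have e_e : Λ 2 2*(ε:ℂ)*Complex.I = Λ 0 0*conj (Λ 0 0)*(ε':ℂ)*Complex.I + Λ 0 0*conj (Λ 1 0)*(δ':ℂ)*Complex.I + -Λ 1 0*conj (Λ 0 0)*(δ':ℂ)*Complex.I := by
    have E1 := k2 (Pi.single 0 1) (Pi.single 0 1)
    have E2 := k2 (Pi.single 0 1) (Pi.single 0 Complex.I)
    have E3 := k2 (Pi.single 0 Complex.I) (Pi.single 0 1)
    have E4 := k2 (Pi.single 0 Complex.I) (Pi.single 0 Complex.I)
    simp only [LHSf, D1f, D2f, D3f, Uu, Vv, Pi.single_apply, Fin.reduceEq,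
      if_true, if_false, ite_true, ite_false, map_zero, map_one, Complex.conj_I,
      mul_zero, zero_mul, mul_one, one_mul, add_zero, zero_add, sub_zero, zero_sub,
      mul_neg, neg_mul, neg_neg, neg_zero] at E1 E2 E3 E4
    linear_combination (E1 + Complex.I*E2 - Complex.I*E3 + E4)/4 + (-B) * hz23 + (-Λ 0 0*conj (Λ 0 0)*(ε':ℂ)*Complex.I + -Λ 0 0*conj (Λ 1 0)*(δ':ℂ)*Complex.I + Λ 1 0*conj (Λ 0 0)*(δ':ℂ)*Complex.I + Λ 2 2*(ε:ℂ)*Complex.I + Λ 2 3*B) * Complex.I_sq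
  have e_f : Λ 3 3*A = Λ 0 0*Λ 1 1*A' := by
    have E1 := k3 (Pi.single 0 1) (Pi.single 1 1)
    have E2 := k3 (Pi.single 0 1) (Pi.single 1 Complex.I)
    have E3 := k3 (Pi.single 0 Complex.I) (Pi.single 1 1)
    have E4 := k3 (Pi.single 0 Complex.I) (Pi.single 1 Complex.I)
    simp only [LHSf, D1f, D2f, D3f, Uu, Vv, Pi.single_apply, Fin.reduceEq,
      if_true, if_false, ite_true, ite_false, map_zero, map_one, Complex.conj_I,
      mul_zero, zero_mul, mul_one, one_mul, add_zero, zero_add, sub_zero, zero_sub,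
      mul_neg, neg_mul, neg_neg, neg_zero] at E1 E2 E3 E4
    linear_combination (E1 - Complex.I*E2 - Complex.I*E3 - E4)/4 + (-Λ 1 0*A') * hz01 + (Λ 1 0*(ν':ℂ)) * hz21 + (-Λ 1 1*(ν':ℂ)) * hz20 + ((-3/4)*Λ 0 0*Λ 1 1*A' + (1/4)*Λ 0 0*conj (Λ 0 1)*B' + (1/2)*Λ 0 0*conj (Λ 2 1)*(δ':ℂ)*(ε':ℂ)*(ν':ℂ) + (3/4)*Λ 0 1*Λ 1 0*A' + (-1/4)*Λ 0 1*conj (Λ 0 0)*B' + (-1/2)*Λ 0 1*conj (Λ 2 0)*(δ':ℂ)*(ε':ℂ)*(ν':ℂ) + (-3/4)*Λ 1 0*Λ 2 1*(ν':ℂ) + (1/4)*Λ 1 0*conj (Λ 2 1)*(ν':ℂ) + (3/4)*Λ 1 1*Λ 2 0*(ν':ℂ) + (-1/4)*Λ 1 1*conj (Λ 2 0)*(ν':ℂ) + (-1/2)*Λ 3 2*(δ:ℂ)*Complex.I + (3/4)*Λ 3 3*A) * Complex.I_sq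
  have e_g : Λ 3 3*(ν:ℂ) = Λ 1 1*Λ 2 2*(ν':ℂ) := by
    have E1 := k3 (Pi.single 1 1) (Pi.single 2 1)
    have E2 := k3 (Pi.single 1 1) (Pi.single 2 Complex.I)
    have E3 := k3 (Pi.single 1 Complex.I) (Pi.single 2 1)
    have E4 := k3 (Pi.single 1 Complex.I) (Pi.single 2 Complex.I)
    simp only [LHSf, D1f, D2f, D3f, Uu, Vv, Pi.single_apply, Fin.reduceEq,
      if_true, if_false, ite_true, ite_false, map_zero, map_one, Complex.conj_I,
      mul_zero, zero_mul, mul_one, one_mul, add_zero, zero_add, sub_zero, zero_sub,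
      mul_neg, neg_mul, neg_neg, neg_zero] at E1 E2 E3 E4
    linear_combination (E1 - Complex.I*E2 - Complex.I*E3 - E4)/4 + (Λ 1 2*A') * hz01 + (-Λ 1 1*A') * hz02 + (-Λ 2 1*(ν':ℂ)) * hz12 + ((-3/4)*Λ 0 1*Λ 1 2*A' + (1/4)*Λ 0 1*conj (Λ 0 2)*B' + (1/2)*Λ 0 1*conj (Λ 2 2)*(δ':ℂ)*(ε':ℂ)*(ν':ℂ) + (3/4)*Λ 0 2*Λ 1 1*A' + (-1/4)*Λ 0 2*conj (Λ 0 1)*B' + (-1/2)*Λ 0 2*conj (Λ 2 1)*(δ':ℂ)*(ε':ℂ)*(ν':ℂ) + (-3/4)*Λ 1 1*Λ 2 2*(ν':ℂ) + (1/4)*Λ 1 1*conj (Λ 2 2)*(ν':ℂ) + (3/4)*Λ 1 2*Λ 2 1*(ν':ℂ) + (-1/4)*Λ 1 2*conj (Λ 2 1)*(ν':ℂ) + (1/2)*Λ 3 3*(ν:ℂ)) * Complex.I_sq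
  have e_h : Λ 3 3*B = Λ 0 0*conj (Λ 0 0)*B' := by
    have E1 := k3 (Pi.single 0 1) (Pi.single 0 1)
    have E2 := k3 (Pi.single 0 1) (Pi.single 0 Complex.I)
    have E3 := k3 (Pi.single 0 Complex.I) (Pi.single 0 1)
    have E4 := k3 (Pi.single 0 Complex.I) (Pi.single 0 Complex.I)
    simp only [LHSf, D1f, D2f, D3f, Uu, Vv, Pi.single_apply, Fin.reduceEq,
      if_true, if_false, ite_true, ite_false, map_zero, map_one, Complex.conj_I,
      mul_zero, zero_mul, mul_one, one_mul, add_zero, zero_add, sub_zero, zero_sub,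
      mul_neg, neg_mul, neg_neg, neg_zero] at E1 E2 E3 E4
    linear_combination (E1 + Complex.I*E2 - Complex.I*E3 + E4)/4 + (-(ε:ℂ)*Complex.I) * hz32 + (2*Λ 0 0*(δ':ℂ)*(ε':ℂ)*(ν':ℂ) + Λ 1 0*(ν':ℂ)) * hz20c + (-Λ 0 0*conj (Λ 0 0)*B' + (-2)*Λ 0 0*conj (Λ 2 0)*(δ':ℂ)*(ε':ℂ)*(ν':ℂ) + -Λ 1 0*conj (Λ 2 0)*(ν':ℂ) + Λ 3 2*(ε:ℂ)*Complex.I + Λ 3 3*B) * Complex.I_sq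
  have e_i : Λ 3 1 = Λ 1 0*Λ 2 2*(ν':ℂ) := by
    have E1 := k3 (Pi.single 0 1) (Pi.single 2 1)
    have E2 := k3 (Pi.single 0 1) (Pi.single 2 Complex.I)
    have E3 := k3 (Pi.single 0 Complex.I) (Pi.single 2 1)
    have E4 := k3 (Pi.single 0 Complex.I) (Pi.single 2 Complex.I)
    simp only [LHSf, D1f, D2f, D3f, Uu, Vv, Pi.single_apply, Fin.reduceEq,
      if_true, if_false, ite_true, ite_false, map_zero, map_one, Complex.conj_I,
      mul_zero, zero_mul, mul_one, one_mul, add_zero, zero_add, sub_zero, zero_sub,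
      mul_neg, neg_mul, neg_neg, neg_zero] at E1 E2 E3 E4
    linear_combination (E1 - Complex.I*E2 - Complex.I*E3 - E4)/4 + (Λ 0 0*A' + -Λ 2 0*(ν':ℂ)) * hz12 + (-Λ 1 0*A') * hz02 + ((-3/4)*Λ 0 0*Λ 1 2*A' + (1/4)*Λ 0 0*conj (Λ 0 2)*B' + (1/2)*Λ 0 0*conj (Λ 2 2)*(δ':ℂ)*(ε':ℂ)*(ν':ℂ) + (3/4)*Λ 0 2*Λ 1 0*A' + (-1/4)*Λ 0 2*conj (Λ 0 0)*B' + (-1/2)*Λ 0 2*conj (Λ 2 0)*(δ':ℂ)*(ε':ℂ)*(ν':ℂ) + (-3/4)*Λ 1 0*Λ 2 2*(ν':ℂ) + (1/4)*Λ 1 0*conj (Λ 2 2)*(ν':ℂ) + (3/4)*Λ 1 2*Λ 2 0*(ν':ℂ) + (-1/4)*Λ 1 2*conj (Λ 2 0)*(ν':ℂ) + (1/2)*Λ 3 1 + (-1/2)*Λ 3 3*(δ:ℂ)*(ε:ℂ)*(ν:ℂ)) * Complex.I_sq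
  -- realness of Λ 2 2
  have hre : conj (Λ 2 2) = Λ 2 2 := by
    have h : Λ 0 0 * (Λ 2 2 - conj (Λ 2 2)) = 0 := by linear_combination e_b - e_a
    have h2 := (mul_eq_zero.mp h).resolve_left h00
    linear_combination -h2
  have hlam : Λ 2 2 = ((Λ 2 2).re : ℂ) := (Complex.conj_eq_iff_re.mp hre).symm
  have hlamne : (Λ 2 2).re ≠ 0 := by
    intro h; exact h22 (by rw [hlam, h]; simp)
  -- δ' = δ and unitarity of Λ 0 0
  have hM11 : conj (Λ 1 1) = conj (Λ 0 0) * Λ 2 2 := by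
    rw [e_a, map_mul, hre]
  have hcc : Complex.I * (δ:ℂ) * Λ 2 2 = Complex.I * ((δ':ℂ) * (Λ 0 0 * conj (Λ 0 0))) * Λ 2 2 := by
    linear_combination e_c + Complex.I*(δ':ℂ)*(Λ 0 0) * hM11
  have hdd2 : (δ:ℂ) = (δ':ℂ) * (Λ 0 0 * conj (Λ 0 0)) :=
    mul_left_cancel₀ Complex.I_ne_zero (mul_right_cancel₀ h22 hcc)
  have hns' : (δ:ℂ) = ((δ' * Complex.normSq (Λ 0 0) : ℝ) : ℂ) := by
    rw [hdd2, Complex.mul_conj]; push_cast; ring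
  have hnsr : δ = δ' * Complex.normSq (Λ 0 0) := by exact_mod_cast hns'
  have hδδ : δ' = δ ∧ Complex.normSq (Λ 0 0) = 1 := by
    rcases hδ with h|h <;> rcases hδ' with h'|h' <;> rw [h, h'] at hnsr ⊢ <;>
      constructor <;> linarith [Complex.normSq_nonneg (Λ 0 0)]
  have hconj1 : Λ 0 0 * conj (Λ 0 0) = 1 := by
    rw [Complex.mul_conj, hδδ.2]; norm_num
  have hδ'ceq : (δ':ℂ) = (δ:ℂ) := by exact_mod_cast congrArg Complex.ofReal hδδ.1
  -- ε relation and Im condition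
  have ht : Complex.I*(ε:ℂ)*Λ 2 2
      = Complex.I*(ε':ℂ) + Complex.I*(δ:ℂ)*(Λ 0 0*conj (Λ 1 0) - conj (Λ 0 0*conj (Λ 1 0))) := by
    rw [map_mul, Complex.conj_conj]
    linear_combination e_e + Complex.I*(ε':ℂ)*hconj1
      + Complex.I*(Λ 0 0*conj (Λ 1 0) - Λ 1 0*conj (Λ 0 0))*hδ'ceq
  rw [Complex.sub_conj] at ht
  have ht2 : Complex.I * ((ε*(Λ 2 2).re - ε' : ℝ):ℂ)
      = ((-(δ*(2*(Λ 0 0 * conj (Λ 1 0)).im)) : ℝ):ℂ) := by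
    push_cast at ht ⊢
    linear_combination ht - Complex.I*(ε:ℂ)*hlam
      + 2*(δ:ℂ)*(((Λ 0 0 * (starRingEnd ℂ) (Λ 1 0)).im : ℝ):ℂ)*Complex.I_sq
  have hsplit := imag_real_zero ht2
  have him : (Λ 0 0 * conj (Λ 1 0)).im = 0 := by
    rcases hδ with h|h <;> rw [h] at hsplit <;> linarith [hsplit.2]
  have hεeq : ε * (Λ 2 2).re = ε' := by linarith [hsplit.1]
  have hεδ : ε' = ε ∧ ε * (1 - (Λ 2 2).re) = 0 := by
    rcases hε with h|h <;> rcases hε' with h'|h' <;> rw [h, h'] at hεeq ⊢ <;>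
      constructor <;> first
        | linarith
        | (exact absurd (by linarith : (Λ 2 2).re = 0) hlamne)
  refine ⟨hεδ.1, hδδ.1, hδδ.2, hlam, hlamne, e_a, hεδ.2, him, ?_, ?_, ?_, ?_⟩
  · linear_combination Λ 1 1 * e_i - Λ 1 0 * e_g
  · rw [eq_div_iff (by exact mul_ne_zero (pow_ne_zero 2 h00) h22)]
    linear_combination -e_f - A'*(Λ 0 0)*e_a
  · linear_combination -e_h - B'*hconj1
  · rw [eq_div_iff (by exact mul_ne_zero h00 (pow_ne_zero 2 h22))]
    linear_combination -e_g - (ν':ℂ)*(Λ 2 2)*e_a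

end Aux

section Constructions

variable {g g' : Type*} [LieRing g] [LieAlgebra ℝ g] [LieRing g'] [LieAlgebra ℝ g']

/-- From an intertwining invertible matrix, build an equivalence of complex structures. -/
theorem equiv_of_intertwiner
    (Jc : ComplexStructure g) (Jc' : ComplexStructure g')
    (ω : Fin 4 → (g →ₗ[ℝ] ℂ)) (ω' : Fin 4 → (g' →ₗ[ℝ] ℂ))
    (ε' δ' ν' : ℝ) (A' B' : ℂ)
    (hωb : Is10Basis Jc ω) (hωb' : Is10Basis Jc' ω')
    (hse' : StarEq ω' ε' δ' ν' A' B')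
    (Λ : Matrix (Fin 4) (Fin 4) ℂ) (hdet : Λ.det ≠ 0)
    (hI : Intertwines ω Λ ε' δ' ν' A' B') :
    Jc.Equiv Jc' := by
  classical
  set T : g →ₗ[ℝ] (Fin 4 → ℂ) := LinearMap.pi ω with hT
  set T' : g' →ₗ[ℝ] (Fin 4 → ℂ) := LinearMap.pi ω' with hT'
  have hTb : Function.Bijective T := hωb.2
  have hTb' : Function.Bijective T' := hωb'.2
  let E : g ≃ₗ[ℝ] (Fin 4 → ℂ) := LinearEquiv.ofBijective T hTb
  let E' : g' ≃ₗ[ℝ] (Fin 4 → ℂ) := LinearEquiv.ofBijective T' hTb'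
  have hdetU : IsUnit Λ.det := isUnit_iff_ne_zero.mpr hdet
  let ME : (Fin 4 → ℂ) ≃ₗ[ℝ] (Fin 4 → ℂ) :=
    LinearEquiv.ofLinear ((Λ.mulVecLin).restrictScalars ℝ) ((Λ⁻¹.mulVecLin).restrictScalars ℝ)
      (by
        apply LinearMap.ext; intro v
        show Λ.mulVec (Λ⁻¹.mulVec v) = v
        rw [Matrix.mulVec_mulVec, Matrix.mul_nonsing_inv Λ hdetU, Matrix.one_mulVec])
      (by
        apply LinearMap.ext; intro v
        show Λ⁻¹.mulVec (Λ.mulVec v) = v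
        rw [Matrix.mulVec_mulVec, Matrix.nonsing_inv_mul Λ hdetU, Matrix.one_mulVec])
  let F : g ≃ₗ[ℝ] g' := E.trans (ME.trans E'.symm)
  have hF : ∀ (i : Fin 4) (X : g), ω' i (F X) = Fof ω Λ i X := by
    intro i X
    have h1 : T' (E'.symm (ME (E X))) = ME (E X) := E'.apply_symm_apply _
    have h2 : ω' i (F X) = (ME (E X)) i := by
      have := congrFun h1 i
      exact this
    rw [h2]
    show Λ.mulVec (fun k => ω k X) i = _
    simp [Matrix.mulVec, dotProduct, Fof, Fin.sum_univ_four]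
  have hFinj : ∀ {u v : g'}, (∀ k, ω' k u = ω' k v) → u = v := by
    intro u v h
    exact hTb'.1 (funext h)
  have hlie : ∀ X Y : g, F ⁅X, Y⁆ = ⁅F X, F Y⁆ := by
    intro X Y
    apply hFinj
    intro k
    rw [hF k]
    have hk : k = 0 ∨ k = 1 ∨ k = 2 ∨ k = 3 := by fin_cases k <;> simp
    rcases hk with rfl | rfl | rfl | rfl
    · have h1 := hse'.1 (F X) (F Y)
      have h2 := hI.1 X Y
      simp only [dd, w2, cF, hF] at h1 h2
      linear_combination h1 - h2
    · have h1 := hse'.2.1 (F X) (F Y)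
      have h2 := hI.2.1 X Y
      simp only [dd, w2, cF, hF] at h1 h2
      linear_combination h1 - h2
    · have h1 := hse'.2.2.1 (F X) (F Y)
      have h2 := hI.2.2.1 X Y
      simp only [dd, w2, cF, hF] at h1 h2
      linear_combination h1 - h2
    · have h1 := hse'.2.2.2 (F X) (F Y)
      have h2 := hI.2.2.2 X Y
      simp only [dd, w2, cF, hF] at h1 h2
      linear_combination h1 - h2
  refine ⟨{ toLieHom := { toLinearMap := F.toLinearMap, map_lie' := fun {X Y} => hlie X Y },
            invFun := F.symm, left_inv := F.left_inv, right_inv := F.right_inv }, ?_⟩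
  intro X
  apply hFinj
  intro k
  show ω' k (F (Jc.J X)) = ω' k (Jc'.J (F X))
  rw [hωb'.1 k (F X), hF k, hF k]
  simp only [Fof, Fin.sum_univ_four, hωb.1 _ X]
  ring
/-- From an equivalence of complex structures, extract an intertwining invertible matrix. -/
theorem intertwiner_of_equiv
    (Jc : ComplexStructure g) (Jc' : ComplexStructure g')
    (ω : Fin 4 → (g →ₗ[ℝ] ℂ)) (ω' : Fin 4 → (g' →ₗ[ℝ] ℂ))
    (ε' δ' ν' : ℝ) (A' B' : ℂ)
    (hωb : Is10Basis Jc ω) (hωb' : Is10Basis Jc' ω')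
    (hse' : StarEq ω' ε' δ' ν' A' B')
    (hEq : Jc.Equiv Jc') :
    ∃ Λ : Matrix (Fin 4) (Fin 4) ℂ, Λ.det ≠ 0 ∧ Intertwines ω Λ ε' δ' ν' A' B' := by
  classical
  obtain ⟨f, hfJ⟩ := hEq
  set T : g →ₗ[ℝ] (Fin 4 → ℂ) := LinearMap.pi ω with hTdef
  have hTb : Function.Bijective T := hωb.2
  let E : g ≃ₗ[ℝ] (Fin 4 → ℂ) := LinearEquiv.ofBijective T hTb
  let fl : g ≃ₗ[ℝ] g' := f.toLinearEquiv
  have hflf : ∀ X : g, fl X = f X := fun X => rfl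
  let βL : Fin 4 → ((Fin 4 → ℂ) →ₗ[ℝ] ℂ) := fun i =>
    ((ω' i).comp fl.toLinearMap).comp E.symm.toLinearMap
  have hβval : ∀ (i : Fin 4) (v : Fin 4 → ℂ), βL i v = ω' i (f (E.symm v)) := fun i v => rfl
  have hEJ : ∀ X : g, E (Jc.J X) = Complex.I • (E X) := by
    intro X
    funext k
    show ω k (Jc.J X) = Complex.I * ω k X
    exact hωb.1 k X
  have hβI : ∀ (i : Fin 4) (v : Fin 4 → ℂ), βL i (Complex.I • v) = Complex.I * βL i v := by
    intro i v
    have hv : E.symm (Complex.I • v) = Jc.J (E.symm v) := by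
      apply E.injective
      rw [E.apply_symm_apply, hEJ, E.apply_symm_apply]
    rw [hβval, hβval, hv, hfJ, hωb'.1]
  set Λ : Matrix (Fin 4) (Fin 4) ℂ := Matrix.of (fun i j => βL i (Pi.single j 1)) with hΛdef
  have hΛval : ∀ i j, Λ i j = βL i (Pi.single j 1) := fun i j => rfl
  have hsingleI : ∀ j : Fin 4, (Pi.single j Complex.I : Fin 4 → ℂ) = Complex.I • (Pi.single j 1 : Fin 4 → ℂ) := by
    intro j
    funext k
    by_cases h : k = j <;> simp [Pi.single_apply, h]
  have hrep : ∀ (i : Fin 4) (v : Fin 4 → ℂ), βL i v = ∑ j : Fin 4, Λ i j * v j := by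
    intro i v
    have hdecomp : v = ∑ j : Fin 4, ((v j).re • (Pi.single j 1 : Fin 4 → ℂ)
        + (v j).im • (Pi.single j Complex.I : Fin 4 → ℂ)) := by
      funext k
      fin_cases k <;>
        simp [Fin.sum_univ_four, Complex.real_smul, Complex.re_add_im]
    conv_lhs => rw [hdecomp]
    rw [map_sum]
    refine Finset.sum_congr rfl ?_
    intro j _
    rw [map_add, map_smul, map_smul, hsingleI, hβI, ← hΛval]
    simp only [smul_eq_mul, Complex.real_smul]
    conv_rhs => rw [← Complex.re_add_im (v j)]
    push_cast
    ring
  have hval : ∀ (i : Fin 4) (X : g), ω' i (f X) = ∑ j : Fin 4, Λ i j * ω j X := by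
    intro i X
    have := hrep i (E X)
    rw [hβval, E.symm_apply_apply] at this
    exact this
  have hvalf : ∀ (i : Fin 4) (X : g), ω' i (f X) = Fof ω Λ i X := hval
  have hdet : Λ.det ≠ 0 := by
    intro h0
    obtain ⟨v, hv0, hv⟩ := Matrix.exists_mulVec_eq_zero_iff.mpr h0
    apply hv0
    have h1 : ∀ i, βL i v = 0 := by
      intro i
      have h2 : Λ.mulVec v i = 0 := by rw [hv]; rfl
      rw [hrep]
      simpa [Matrix.mulVec, dotProduct] using h2
    have h3 : f (E.symm v) = 0 := by
      apply hωb'.2.1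
      funext k
      show ω' k (f (E.symm v)) = ω' k 0
      rw [map_zero]
      have := h1 k
      rwa [hβval] at this
    have h4 : E.symm v = 0 := by
      apply fl.injective
      rw [map_zero]
      exact h3
    have := congrArg E h4
    rwa [E.apply_symm_apply, map_zero] at this
  have hm : ∀ X Y : g, f ⁅X, Y⁆ = ⁅f X, f Y⁆ := fun X Y => f.toLieHom.map_lie X Y
  refine ⟨Λ, hdet, ?_, ?_, ?_, ?_⟩ <;> intro X Y
  · have h1 := hse'.1 (f X) (f Y)
    have hbr : Fof ω Λ 0 ⁅X, Y⁆ = ω' 0 ⁅f X, f Y⁆ :=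
      (hvalf 0 ⁅X, Y⁆).symm.trans (congrArg (ω' 0) (hm X Y))
    simp only [dd, w2, cF] at h1 ⊢
    rw [hbr]
    try simp only [hvalf] at h1
    linear_combination h1
  · have h1 := hse'.2.1 (f X) (f Y)
    have hbr : Fof ω Λ 1 ⁅X, Y⁆ = ω' 1 ⁅f X, f Y⁆ :=
      (hvalf 1 ⁅X, Y⁆).symm.trans (congrArg (ω' 1) (hm X Y))
    simp only [dd, w2, cF] at h1 ⊢
    rw [hbr]
    try simp only [hvalf] at h1
    linear_combination h1
  · have h1 := hse'.2.2.1 (f X) (f Y)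
    have hbr : Fof ω Λ 2 ⁅X, Y⁆ = ω' 2 ⁅f X, f Y⁆ :=
      (hvalf 2 ⁅X, Y⁆).symm.trans (congrArg (ω' 2) (hm X Y))
    simp only [dd, w2, cF] at h1 ⊢
    rw [hbr]
    try simp only [hvalf] at h1
    linear_combination h1
  · have h1 := hse'.2.2.2 (f X) (f Y)
    have hbr : Fof ω Λ 3 ⁅X, Y⁆ = ω' 3 ⁅f X, f Y⁆ :=
      (hvalf 3 ⁅X, Y⁆).symm.trans (congrArg (ω' 3) (hm X Y))
    simp only [dd, w2, cF] at h1 ⊢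
    rw [hbr]
    try simp only [hvalf] at h1
    linear_combination h1

end Constructions

/-- Lemma 3.8: the complex structures `J` and `J'` determined by the equations (★) with
admissible parameters are equivalent if and only if there is a ℂ-linear isomorphism
`F(ω'^i) = Σ_j λ^i_j ω^j` commuting with `d`, triangular, and satisfying the normalizations
`λ¹₁ = e^{iθ}`, `λ²₂ = λ e^{iθ}`, `λ³₃ = λ`, `ε(1−λ) = 0`, `Im(e^{iθ} conj(λ²₁)) = 0` and
`λ e^{iθ} λ⁴₂ − ν λ²₁ λ⁴₄ = 0`; moreover, for any such `F` the parameters are related by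
`ε' = ε`, `δ' = δ`, `a' = a λ⁴₄/((λ¹₁)² λ³₃)`, `B' = B λ⁴₄`, `ν' = ν λ⁴₄/(λ¹₁ (λ³₃)²)`. -/
theorem equivalence_iff_normalized_intertwiner
    {g g' : Type*} [LieRing g] [LieAlgebra ℝ g] [LieRing g'] [LieAlgebra ℝ g']
    (h8 : Module.finrank ℝ g = 8) (hg : IsNilpotentLie g)
    (Jc : ComplexStructure g) (hw : Jc.IsWnN)
    (h8' : Module.finrank ℝ g' = 8) (hg' : IsNilpotentLie g')
    (Jc' : ComplexStructure g') (hw' : Jc'.IsWnN)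
    (ω : Fin 4 → (g →ₗ[ℝ] ℂ)) (ε δ ν a : ℝ) (B : ℂ)
    (hωb : Is10Basis Jc ω) (had : Admissible ε δ ν a B) (hse : StarEq ω ε δ ν (a : ℂ) B)
    (ω' : Fin 4 → (g' →ₗ[ℝ] ℂ)) (ε' δ' ν' a' : ℝ) (B' : ℂ)
    (hωb' : Is10Basis Jc' ω') (had' : Admissible ε' δ' ν' a' B')
    (hse' : StarEq ω' ε' δ' ν' (a' : ℂ) B') :
    (Jc.Equiv Jc' ↔
      ∃ Λ : Matrix (Fin 4) (Fin 4) ℂ, Λ.det ≠ 0 ∧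
        Intertwines ω Λ ε' δ' ν' (a' : ℂ) B' ∧ TriangularPat Λ ∧
        ∃ (θ lam : ℝ), 0 ≤ θ ∧ θ < 2 * Real.pi ∧ lam ≠ 0 ∧
          Λ 0 0 = Complex.exp ((θ : ℂ) * Complex.I) ∧
          Λ 1 1 = (lam : ℂ) * Complex.exp ((θ : ℂ) * Complex.I) ∧
          Λ 2 2 = (lam : ℂ) ∧
          ε * (1 - lam) = 0 ∧
          (Complex.exp ((θ : ℂ) * Complex.I) * (starRingEnd ℂ) (Λ 1 0)).im = 0 ∧
          (lam : ℂ) * Complex.exp ((θ : ℂ) * Complex.I) * Λ 3 1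
            - (ν : ℂ) * Λ 1 0 * Λ 3 3 = 0) ∧
    (∀ Λ : Matrix (Fin 4) (Fin 4) ℂ, Λ.det ≠ 0 →
      Intertwines ω Λ ε' δ' ν' (a' : ℂ) B' → TriangularPat Λ →
        ε' = ε ∧ δ' = δ ∧
        (a' : ℂ) = (a : ℂ) * Λ 3 3 / ((Λ 0 0) ^ 2 * Λ 2 2) ∧
        B' = B * Λ 3 3 ∧
        (ν' : ℂ) = (ν : ℂ) * Λ 3 3 / (Λ 0 0 * (Λ 2 2) ^ 2)) := by
  have hδ : δ = 1 ∨ δ = -1 := had.2.1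
  have hδ' : δ' = 1 ∨ δ' = -1 := had'.2.1
  have hε : ε = 0 ∨ ε = 1 := had.1
  have hε' : ε' = 0 ∨ ε' = 1 := had'.1
  constructor
  · constructor
    · intro hEq
      obtain ⟨Λ, hdet, hI⟩ :=
        intertwiner_of_equiv Jc Jc' ω ω' ε' δ' ν' (a':ℂ) B' hωb hωb' hse' hEq
      obtain ⟨k0, k1, k2, k3⟩ :=
        keys_of_intertwines Jc ω Λ ε δ ν (a:ℂ) B ε' δ' ν' (a':ℂ) B' hωb hse hI
      have hp := triangular_of_keys hdet hδ hδ' k0 k1 k2 k3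
      obtain ⟨hε'ε, hδ'δ, hns, hlam, hlamne, h11e, hεlam, him, hrel31, ha', hB', hν'⟩ :=
        relations_of_keys hdet hε hδ hε' hδ' k1 k2 k3 hp
      have habs : ‖Λ 0 0‖ = 1 := by
        rw [Complex.norm_def, hns, Real.sqrt_one]
      have hexp0 : Complex.exp (((Λ 0 0).arg : ℂ) * Complex.I) = Λ 0 0 := by
        have h := Complex.norm_mul_exp_arg_mul_I (Λ 0 0)
        rwa [habs, Complex.ofReal_one, one_mul] at h
      obtain ⟨θ, hθ0, hθ2, hexpθ⟩ :
          ∃ θ : ℝ, 0 ≤ θ ∧ θ < 2 * Real.pi ∧ Complex.exp ((θ:ℂ) * Complex.I) = Λ 0 0 := by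
        by_cases hsign : 0 ≤ (Λ 0 0).arg
        · exact ⟨(Λ 0 0).arg, hsign,
            lt_of_le_of_lt (Complex.arg_le_pi _) (by linarith [Real.pi_pos]), hexp0⟩
        · refine ⟨(Λ 0 0).arg + 2 * Real.pi,
            by linarith [Complex.neg_pi_lt_arg (Λ 0 0), Real.pi_pos], by linarith, ?_⟩
          have hc : (((Λ 0 0).arg + 2 * Real.pi : ℝ) : ℂ) * Complex.I
              = ((Λ 0 0).arg : ℂ) * Complex.I + 2 * (Real.pi : ℂ) * Complex.I := by
            push_cast; ring
          rw [hc, Complex.exp_add, Complex.exp_two_pi_mul_I, mul_one, hexp0]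
      have hx : (((Λ 2 2).re : ℝ) : ℂ) * Λ 0 0 = Λ 1 1 := by linear_combination -h11e - Λ 0 0 * hlam
      refine ⟨Λ, hdet, hI, hp, θ, (Λ 2 2).re, hθ0, hθ2, hlamne, hexpθ.symm, ?_, hlam,
        hεlam, ?_, ?_⟩
      · rw [hexpθ]; linear_combination h11e + Λ 0 0 * hlam
      · rw [hexpθ]; exact him
      · rw [hexpθ]
        linear_combination hrel31 + Λ 3 1 * hx
    · rintro ⟨Λ, hdet, hI, -⟩
      exact equiv_of_intertwiner Jc Jc' ω ω' ε' δ' ν' (a':ℂ) B' hωb hωb' hse' Λ hdet hI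
  · intro Λ hdet hI hp
    obtain ⟨k0, k1, k2, k3⟩ :=
      keys_of_intertwines Jc ω Λ ε δ ν (a:ℂ) B ε' δ' ν' (a':ℂ) B' hωb hse hI
    obtain ⟨hε'ε, hδ'δ, hns, hlam, hlamne, h11e, hεlam, him, hrel31, ha', hB', hν'⟩ :=
      relations_of_keys hdet hε hδ hε' hδ' k1 k2 k3 hp
    exact ⟨hε'ε, hδ'δ, ha', hB', hν'⟩

end Paper
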